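/- Let λ > 0 and 0 ≤ b < 1. Then ∫_{0}^{1} (1 - b s)^{-λ-1} (1 - s)^{λ-1} ds ≤ C (1/λ + ((λ+1)/λ) b ∫_{0}^{1} (1 - b s)^{-2} ds) for an absolute constant C, and hence this integral is ≲ 1/(1 - b) with implied constant depending only on λ. -/

import Mathlib

open MeasureTheory Set

private lemma paley_key (lam : ℝ) (hlam : 0 < lam) (b : ℝ) (hb0 : 0 ≤ b) (hb1 : b < 1) :
    ∫ s in (0 : ℝ)..1, (1 - b * s) ^ (-lam - 1) * (1 - s) ^ (lam - 1)
      = 1 / (lam * (1 - b)) := by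
  have h1b : 0 < 1 - b := by linarith
  set c : ℝ := 1 / (lam * (1 - b)) with hc
  set F : ℝ → ℝ := fun s => -c * ((1 - s) ^ lam * (1 - b * s) ^ (-lam)) with hF
  have hpos : ∀ x : ℝ, x ≤ 1 → 0 ≤ b * x → 0 < 1 - b * x := by
    intro x hx hbx
    nlinarith
  -- continuity of F on Icc 0 1
  have hcont : ContinuousOn F (Icc (0:ℝ) 1) := by
    apply ContinuousOn.mul continuousOn_const
    apply ContinuousOn.mul
    · exact (continuousOn_const.sub continuousOn_id).rpow_const
        (fun x hx => Or.inr hlam.le)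
    · exact (continuousOn_const.sub (continuousOn_const.mul continuousOn_id)).rpow_const
        (fun x hx => Or.inl (ne_of_gt (by show (0:ℝ) < 1 - b * x; nlinarith [hx.1, hx.2])))
  -- derivative on the interior
  have hderiv : ∀ x ∈ Ioo (0:ℝ) 1, HasDerivAt F
      ((1 - b * x) ^ (-lam - 1) * (1 - x) ^ (lam - 1)) x := by
    intro x hx
    have hu : 0 < 1 - x := by linarith [hx.2]
    have hv : 0 < 1 - b * x := by nlinarith [hx.1.le, hx.2.le]
    have d1 : HasDerivAt (fun s : ℝ => (1 - s) ^ lam) ((-1) * lam * (1 - x) ^ (lam - 1)) x := by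
      have h := ((hasDerivAt_id x).const_sub 1).rpow_const (p := lam) (Or.inl hu.ne')
      simpa using h
    have d2 : HasDerivAt (fun s : ℝ => (1 - b * s) ^ (-lam))
        ((-b) * (-lam) * (1 - b * x) ^ (-lam - 1)) x := by
      have h := (((hasDerivAt_id x).const_mul b).const_sub 1).rpow_const (p := -lam)
        (Or.inl hv.ne')
      simpa [mul_comm, mul_assoc, mul_left_comm] using h
    have d3 := (d1.mul d2).const_mul (-c)
    convert d3 using 1
    case e'_4 => rfl
    case e'_5 => rfl
    case e'_8 => rfl
    have e1 : (1 - x) ^ lam = (1 - x) ^ (lam - 1) * (1 - x) := by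
      rw [show lam = (lam - 1) + 1 by ring, Real.rpow_add_one hu.ne']; ring_nf
    have e2 : (1 - b * x) ^ (-lam) = (1 - b * x) ^ (-lam - 1) * (1 - b * x) := by
      rw [show -lam = (-lam - 1) + 1 by ring, Real.rpow_add_one hv.ne']; ring_nf
    rw [e1, e2, hc]
    field_simp
    ring
  -- integrability of the integrand
  have hint : IntervalIntegrable
      (fun s : ℝ => (1 - b * s) ^ (-lam - 1) * (1 - s) ^ (lam - 1)) volume 0 1 := by
    have h1 : IntervalIntegrable (fun s : ℝ => s ^ (lam - 1)) volume 0 1 :=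
      intervalIntegral.intervalIntegrable_rpow' (by linarith)
    have h2 : IntervalIntegrable (fun s : ℝ => (1 - s) ^ (lam - 1)) volume 0 1 := by
      have := (h1.comp_sub_left 1).symm
      simpa using this
    apply h2.continuousOn_mul
    apply (continuousOn_const.sub (continuousOn_const.mul continuousOn_id)).rpow_const
    intro x hx
    rw [uIcc_of_le (by norm_num)] at hx
    exact Or.inl (ne_of_gt (by show (0:ℝ) < 1 - b * x; nlinarith [hx.1, hx.2]))
  have := intervalIntegral.integral_eq_sub_of_hasDeriv_right_of_le (by norm_num) hcont
    (fun x hx => (hderiv x hx).hasDerivWithinAt) hint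
  rw [this]
  simp [hF, Real.zero_rpow hlam.ne']

private lemma paley_key2 (b : ℝ) (hb0 : 0 ≤ b) (hb1 : b < 1) :
    ∫ s in (0 : ℝ)..1, (1 - b * s) ^ (-2 : ℝ) = 1 / (1 - b) := by
  have h1b : 0 < 1 - b := by linarith
  rcases eq_or_lt_of_le hb0 with h | h
  · simp [← h]
  · have hderiv : ∀ x ∈ uIcc (0:ℝ) 1, HasDerivAt (fun s : ℝ => b⁻¹ * (1 - b * s) ^ (-1 : ℝ))
        ((1 - b * x) ^ (-2 : ℝ)) x := by
      intro x hx
      rw [uIcc_of_le (by norm_num)] at hx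
      have hv : 0 < 1 - b * x := by nlinarith [hx.1, hx.2]
      have d := ((((hasDerivAt_id x).const_mul b).const_sub 1).rpow_const (p := (-1 : ℝ))
        (Or.inl hv.ne')).const_mul b⁻¹
      convert d using 1
      case e'_4 => rfl
      case e'_5 => rfl
      case e'_8 => rfl
      rw [show (-1 : ℝ) - 1 = -2 by norm_num]
      field_simp
      rfl
    have hint : IntervalIntegrable (fun s : ℝ => (1 - b * s) ^ (-2 : ℝ)) volume 0 1 := by
      apply ContinuousOn.intervalIntegrable
      apply (continuousOn_const.sub (continuousOn_const.mul continuousOn_id)).rpow_const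
      intro x hx
      rw [uIcc_of_le (by norm_num)] at hx
      exact Or.inl (ne_of_gt (by show (0:ℝ) < 1 - b * x; nlinarith [hx.1, hx.2]))
    rw [intervalIntegral.integral_eq_sub_of_hasDerivAt hderiv hint]
    rw [mul_one, mul_zero, sub_zero, Real.one_rpow, Real.rpow_neg_one]
    field_simp
    ring

theorem paley_stmt5 :
    (∃ C > (0 : ℝ), ∀ lam : ℝ, 0 < lam → ∀ b : ℝ, 0 ≤ b → b < 1 →
      ∫ s in (0 : ℝ)..1, (1 - b * s) ^ (-lam - 1) * (1 - s) ^ (lam - 1)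
        ≤ C * (1 / lam + ((lam + 1) / lam) * b *
            ∫ s in (0 : ℝ)..1, (1 - b * s) ^ (-2 : ℝ))) ∧
    ∀ lam : ℝ, 0 < lam → ∃ C > (0 : ℝ), ∀ b : ℝ, 0 ≤ b → b < 1 →
      ∫ s in (0 : ℝ)..1, (1 - b * s) ^ (-lam - 1) * (1 - s) ^ (lam - 1)
        ≤ C / (1 - b) := by
  constructor
  · refine ⟨1, one_pos, ?_⟩
    intro lam hlam b hb0 hb1
    have h1b : 0 < 1 - b := by linarith
    rw [paley_key lam hlam b hb0 hb1, paley_key2 b hb0 hb1, one_mul]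
    have : 1 / lam + (lam + 1) / lam * b * (1 / (1 - b)) = (1 + lam * b) / (lam * (1 - b)) := by
      field_simp
      ring
    rw [this]
    gcongr
    nlinarith
  · intro lam hlam
    refine ⟨1 / lam, by positivity, ?_⟩
    intro b hb0 hb1
    rw [paley_key lam hlam b hb0 hb1, div_div]
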